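/- Let d, χ be positive integers, A : Fin d → Matrix (Fin χ) (Fin χ) ℂ a left-canonical MPS tensor with right fixed point ρ, and U ∈ Matrix (Fin d) (Fin d) ℂ unitary. Then the U-transfer map is a contraction for the ρ-weighted norm: for every v ∈ Matrix (Fin χ) (Fin χ) ℂ, ‖T_U(v)‖_ρ ≤ ‖v‖_ρ. -/

import Mathlib

open Matrix BigOperators
open scoped ComplexOrder

/-- The ρ-weighted norm on χ×χ complex matrices: `‖v‖_ρ = √(Tr(vᴴ * v * ρ))`. -/
noncomputable def rhoNorm {χ : ℕ} (ρ v : Matrix (Fin χ) (Fin χ) ℂ) : ℝ :=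
  Real.sqrt ((vᴴ * v * ρ).trace.re)

/-- The `U`-transfer map `T_U(v) = ∑_{s,t} U s t • ((A s)ᴴ * v * (A t))`. -/
noncomputable def transferMap {d χ : ℕ} (A : Fin d → Matrix (Fin χ) (Fin χ) ℂ)
    (U : Matrix (Fin d) (Fin d) ℂ) (v : Matrix (Fin χ) (Fin χ) ℂ) :
    Matrix (Fin χ) (Fin χ) ℂ :=
  ∑ s, ∑ t, (U s t) • ((A s)ᴴ * v * (A t))

open Kronecker

lemma trace_psd_re_nonneg {n : Type*} [Fintype n] [DecidableEq n]
    {M : Matrix n n ℂ} (hM : M.PosSemidef) :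
    0 ≤ M.trace.re := by
  rw [Matrix.trace]
  have h : ∀ i, 0 ≤ (M i i).re := by
    intro i
    have := hM.re_dotProduct_nonneg (Pi.single i 1)
    simpa [dotProduct, Matrix.mulVec, Pi.single_apply, Finset.sum_ite_eq] using this
  calc (0:ℝ) ≤ ∑ i, (M i i).re := Finset.sum_nonneg fun i _ => h i
    _ = _ := by simp [Matrix.diag, Complex.re_sum]

lemma conjT_kron {l m p q : Type*} [Fintype l] [Fintype m] [Fintype p] [Fintype q]
    (X : Matrix l m ℂ) (Y : Matrix p q ℂ) : (X ⊗ₖ Y)ᴴ = Xᴴ ⊗ₖ Yᴴ := by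
  ext ⟨a,b⟩ ⟨c,d⟩
  simp [Matrix.conjTranspose_apply, Matrix.kroneckerMap_apply, mul_comm]

theorem transfer_contraction {d χ : ℕ} (hd : 0 < d) (hχ : 0 < χ)
    (A : Fin d → Matrix (Fin χ) (Fin χ) ℂ)
    (hA : ∑ s, (A s)ᴴ * (A s) = 1)
    (ρ : Matrix (Fin χ) (Fin χ) ℂ) (hρ : ρ.PosDef)
    (hfix : ∑ s, A s * ρ * (A s)ᴴ = ρ)
    (U : Matrix (Fin d) (Fin d) ℂ) (hU : U ∈ Matrix.unitaryGroup (Fin d) ℂ) :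
    ∀ v : Matrix (Fin χ) (Fin χ) ℂ, rhoNorm ρ (transferMap A U v) ≤ rhoNorm ρ v := by
  intro v
  set V : Matrix (Fin d × Fin χ) (Fin χ) ℂ := Matrix.of (fun p j => A p.1 p.2 j) with hV
  have hVV : Vᴴ * V = 1 := by
    rw [← hA]
    ext i j
    simp only [Matrix.mul_apply, Matrix.conjTranspose_apply, Matrix.sum_apply, hV,
      Matrix.of_apply]
    rw [Fintype.sum_prod_type]
  set B : Matrix (Fin d × Fin χ) (Fin d × Fin χ) ℂ := U ⊗ₖ v with hB
  have hTv : transferMap A U v = Vᴴ * B * V := by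
    ext i j
    simp only [transferMap, Matrix.sum_apply, Matrix.smul_apply, Matrix.mul_apply,
      Matrix.conjTranspose_apply, hV, hB, Matrix.of_apply, Matrix.kroneckerMap_apply,
      smul_eq_mul, Fintype.sum_prod_type]
    rw [Finset.sum_comm]
    refine Finset.sum_congr rfl fun t _ => ?_
    simp only [Finset.mul_sum, Finset.sum_mul]
    rw [Finset.sum_comm]
    refine Finset.sum_congr rfl fun l _ => ?_
    refine Finset.sum_congr rfl fun s _ => ?_
    refine Finset.sum_congr rfl fun k _ => ?_
    ring
  -- Vᴴ (1 ⊗ₖ M) V = ∑ t, A_tᴴ M A_t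
  have hsum : ∀ M : Matrix (Fin χ) (Fin χ) ℂ,
      Vᴴ * ((1 : Matrix (Fin d) (Fin d) ℂ) ⊗ₖ M) * V = ∑ t, (A t)ᴴ * M * (A t) := by
    intro M
    ext i j
    simp only [Matrix.mul_apply, Matrix.conjTranspose_apply, Matrix.sum_apply, hV,
      Matrix.of_apply, Matrix.kroneckerMap_apply, Fintype.sum_prod_type, Matrix.one_apply,
      ite_mul, mul_ite, one_mul, zero_mul, mul_zero, Finset.sum_ite_eq, Finset.mem_univ,
      if_true]
    refine Finset.sum_congr rfl fun t _ => ?_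
    simp only [Finset.sum_mul]
    refine Finset.sum_congr rfl fun l _ => ?_
    rw [Finset.sum_comm]
    refine Finset.sum_congr rfl fun k _ => ?_
    rw [Finset.sum_eq_single t (fun b _ hb => by simp [if_neg hb]) (by simp), if_pos rfl]
  have hBB : Bᴴ * B = (1 : Matrix (Fin d) (Fin d) ℂ) ⊗ₖ (vᴴ * v) := by
    have hUU : Uᴴ * U = 1 := by simpa [Matrix.star_eq_conjTranspose] using hU.1
    rw [hB, conjT_kron, ← Matrix.mul_kronecker_mul, hUU]
  set w := transferMap A U v with hw
  set P : Matrix (Fin d × Fin χ) (Fin d × Fin χ) ℂ := V * Vᴴ with hP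
  set Q : Matrix (Fin d × Fin χ) (Fin d × Fin χ) ℂ := 1 - P with hQ
  have hPP : P * P = P := by
    rw [hP, Matrix.mul_assoc, ← Matrix.mul_assoc Vᴴ, hVV, Matrix.one_mul]
  have hQH : Qᴴ = Q := by
    rw [hQ, hP]
    simp [Matrix.conjTranspose_sub, Matrix.conjTranspose_mul]
  have hQQ : Qᴴ * Q = Q := by
    rw [hQH, hQ, Matrix.sub_mul, Matrix.one_mul, Matrix.mul_sub, Matrix.mul_one, hPP,
      sub_self, sub_zero]
  set C : Matrix (Fin d × Fin χ) (Fin χ) ℂ := Q * B * V with hC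
  set S : Matrix (Fin χ) (Fin χ) ℂ := ∑ t, (A t)ᴴ * (vᴴ * v) * (A t) with hS
  have hCC : Cᴴ * C = S - wᴴ * w := by
    have h1 : Cᴴ * C = Vᴴ * Bᴴ * (Qᴴ * Q) * B * V := by
      rw [hC]
      simp only [Matrix.conjTranspose_mul, Matrix.mul_assoc]
    rw [h1, hQQ, hQ]
    have h2 : Vᴴ * Bᴴ * (1 - P) * B * V
        = Vᴴ * Bᴴ * B * V - (Vᴴ * B * V)ᴴ * (Vᴴ * B * V) := by
      simp only [Matrix.conjTranspose_mul, Matrix.conjTranspose_conjTranspose, hP,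
        Matrix.mul_sub, Matrix.sub_mul, Matrix.mul_one, Matrix.mul_assoc]
    rw [h2, ← hTv, Matrix.mul_assoc Vᴴ Bᴴ B, hBB]
    rw [show (Vᴴ * (kroneckerMap (fun x1 x2 => x1 * x2) (1 : Matrix (Fin d) (Fin d) ℂ) (vᴴ * v)) * V :
        Matrix (Fin χ) (Fin χ) ℂ) = S from
      (hsum (vᴴ * v)).trans hS.symm]
  -- trace identity: Tr(S ρ) = Tr(vᴴ v ρ)
  have hStr : (S * ρ).trace = (vᴴ * v * ρ).trace := by
    rw [hS, Finset.sum_mul, Matrix.trace_sum]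
    have : ∀ t, ((A t)ᴴ * (vᴴ * v) * (A t) * ρ).trace
        = (vᴴ * v * (A t * ρ * (A t)ᴴ)).trace := by
      intro t
      rw [Matrix.mul_assoc ((A t)ᴴ), Matrix.mul_assoc ((A t)ᴴ), Matrix.trace_mul_comm]
      simp only [Matrix.mul_assoc]
    simp_rw [this]
    rw [← Matrix.trace_sum, ← Finset.mul_sum, hfix]
  have hD : 0 ≤ ((Cᴴ * C) * ρ).trace.re := by
    rw [Matrix.mul_assoc, Matrix.trace_mul_comm]
    exact trace_psd_re_nonneg (hρ.posSemidef.mul_mul_conjTranspose_same C)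
  have hkey : (wᴴ * w * ρ).trace.re ≤ (vᴴ * v * ρ).trace.re := by
    have hexp : (Cᴴ * C) * ρ = S * ρ - wᴴ * w * ρ := by rw [hCC, Matrix.sub_mul]
    rw [hexp, Matrix.trace_sub, hStr, Complex.sub_re] at hD
    linarith
  unfold rhoNorm
  exact Real.sqrt_le_sqrt hkey
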